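/- arXiv:math-ph/0111044 — 2 statements merged into one kernel-verified Lean document; each statement's English description precedes it below -/
import Mathlib

section
/- Let d = 3 and define t_rel(ξ, P) = √(|μ₊P − ξ|² + m₊²) + √(|μ₋P + ξ|² + m₋²) − √(p² + M²), where M = m₊ + m₋ > 0, μ± = m±/M, P = (p,0,0), ξ = (η, ζ) ∈ ℝ × ℝ². If p ≥ ν ≥ M and either |η| ≥ 3p or |ζ|² ≥ νp, then t_rel(ξ, P) ≥ ν/(2√3). -/
lemma mink3 (x y a b c d : ℝ) :
    Real.sqrt ((x + y) ^ 2 + (a + b) ^ 2 + (c + d) ^ 2) ≤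
      Real.sqrt (x ^ 2 + a ^ 2 + c ^ 2) + Real.sqrt (y ^ 2 + b ^ 2 + d ^ 2) := by
  have h1 : (0:ℝ) ≤ x ^ 2 + a ^ 2 + c ^ 2 := by positivity
  have h2 : (0:ℝ) ≤ y ^ 2 + b ^ 2 + d ^ 2 := by positivity
  have hcs : (x * y + a * b + c * d) ^ 2 ≤ (x ^ 2 + a ^ 2 + c ^ 2) * (y ^ 2 + b ^ 2 + d ^ 2) := by
    nlinarith [sq_nonneg (x * b - a * y), sq_nonneg (x * d - c * y), sq_nonneg (a * d - c * b)]
  have hs : x * y + a * b + c * d ≤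
      Real.sqrt (x ^ 2 + a ^ 2 + c ^ 2) * Real.sqrt (y ^ 2 + b ^ 2 + d ^ 2) := by
    rw [← Real.sqrt_mul h1]
    calc x * y + a * b + c * d ≤ |x * y + a * b + c * d| := le_abs_self _
      _ = Real.sqrt ((x * y + a * b + c * d) ^ 2) := (Real.sqrt_sq_eq_abs _).symm
      _ ≤ _ := Real.sqrt_le_sqrt hcs
  have e1 := Real.sq_sqrt h1
  have e2 := Real.sq_sqrt h2
  have hb : (x + y) ^ 2 + (a + b) ^ 2 + (c + d) ^ 2 ≤
      (Real.sqrt (x ^ 2 + a ^ 2 + c ^ 2) + Real.sqrt (y ^ 2 + b ^ 2 + d ^ 2)) ^ 2 := by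
    nlinarith [hs]
  calc Real.sqrt ((x + y) ^ 2 + (a + b) ^ 2 + (c + d) ^ 2)
      ≤ Real.sqrt ((Real.sqrt (x ^ 2 + a ^ 2 + c ^ 2) + Real.sqrt (y ^ 2 + b ^ 2 + d ^ 2)) ^ 2) :=
        Real.sqrt_le_sqrt hb
    _ = _ := Real.sqrt_sq (by positivity)

set_option maxHeartbeats 1000000 in
theorem stmt_6 (mp mm M μp μm p ν η : ℝ) (ζ : EuclideanSpace ℝ (Fin 2))
    (hmp : 0 < mp) (hmm : 0 < mm) (hM : M = mp + mm)
    (hμp : μp = mp / M) (hμm : μm = mm / M)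
    (hνM : M ≤ ν) (hpν : ν ≤ p)
    (hcase : 3 * p ≤ |η| ∨ ν * p ≤ ‖ζ‖ ^ 2) :
    ν / (2 * Real.sqrt 3) ≤
      Real.sqrt ((μp * p - η) ^ 2 + ‖ζ‖ ^ 2 + mp ^ 2)
        + Real.sqrt ((μm * p + η) ^ 2 + ‖ζ‖ ^ 2 + mm ^ 2)
        - Real.sqrt (p ^ 2 + M ^ 2) := by
  have hM0 : 0 < M := by rw [hM]; linarith
  have hν0 : 0 < ν := lt_of_lt_of_le hM0 hνM
  have hp0 : 0 < p := lt_of_lt_of_le hν0 hpν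
  set z := ‖ζ‖ with hzdef
  have hz0 : 0 ≤ z := norm_nonneg _
  have hμsum : μp + μm = 1 := by
    rw [hμp, hμm]
    field_simp
    linarith
  have hμp0 : 0 ≤ μp := by rw [hμp]; positivity
  have hμm0 : 0 ≤ μm := by rw [hμm]; positivity
  have hμp1 : μp ≤ 1 := by linarith
  have hμm1 : μm ≤ 1 := by linarith
  set x1 := μp * p - η with hx1
  set x2 := μm * p + η with hx2
  have hx12 : x1 + x2 = p := by
    rw [hx1, hx2]; linear_combination p * hμsum
  -- main bound: sqrt(p^2 + 3νp + M^2) ≤ sum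
  have hmain : Real.sqrt (p ^ 2 + 3 * ν * p + M ^ 2) ≤
      Real.sqrt (x1 ^ 2 + z ^ 2 + mp ^ 2) + Real.sqrt (x2 ^ 2 + z ^ 2 + mm ^ 2) := by
    rcases hcase with h | h
    · -- case |η| ≥ 3p
      have habs : 2 * p ≤ |x1| + |x2| := by
        rcases abs_cases η with ⟨he, he0⟩ | ⟨he, he0⟩
        · -- η ≥ 0, so η ≥ 3p
          have h3 : 3 * p ≤ η := by linarith
          have hx1b : η - μp * p ≤ |x1| := by
            have : -x1 ≤ |x1| := neg_le_abs x1
            rw [hx1] at this; linarith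
          have hx2b : μm * p + η ≤ |x2| := le_abs_self x2
          nlinarith
        · -- η < 0, so η ≤ -3p
          have h3 : η ≤ -(3 * p) := by linarith
          have hx1b : μp * p - η ≤ |x1| := le_abs_self x1
          have hx2b : -(μm * p + η) ≤ |x2| := neg_le_abs x2
          nlinarith
      have h1 : Real.sqrt (x1 ^ 2 + mp ^ 2) ≤ Real.sqrt (x1 ^ 2 + z ^ 2 + mp ^ 2) :=
        Real.sqrt_le_sqrt (by nlinarith [sq_nonneg z])
      have h2 : Real.sqrt (x2 ^ 2 + mm ^ 2) ≤ Real.sqrt (x2 ^ 2 + z ^ 2 + mm ^ 2) :=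
        Real.sqrt_le_sqrt (by nlinarith [sq_nonneg z])
      have hmk := mink3 |x1| |x2| mp mm 0 0
      simp only [sq_abs, add_zero] at hmk
      have hmono : Real.sqrt (p ^ 2 + 3 * ν * p + M ^ 2) ≤
          Real.sqrt ((|x1| + |x2|) ^ 2 + (mp + mm) ^ 2 + (0:ℝ) ^ 2) := by
        apply Real.sqrt_le_sqrt
        have habs0 : (0:ℝ) ≤ 2 * p := by positivity
        have h4 : (2 * p) ^ 2 ≤ (|x1| + |x2|) ^ 2 := pow_le_pow_left₀ habs0 habs 2
        have h5 : ν * p ≤ p * p := mul_le_mul_of_nonneg_right hpν hp0.le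
        rw [← hM]
        nlinarith [h4, h5]
      have hz1 : x1 ^ 2 + mp ^ 2 + 0 ^ 2 = x1 ^ 2 + mp ^ 2 := by ring
      have hz2 : x2 ^ 2 + mm ^ 2 + 0 ^ 2 = x2 ^ 2 + mm ^ 2 := by ring
      rw [hz1, hz2] at hmk
      linarith
    · -- case νp ≤ z^2
      have hmk := mink3 x1 x2 z z mp mm
      rw [hx12] at hmk
      have hmono : Real.sqrt (p ^ 2 + 3 * ν * p + M ^ 2) ≤
          Real.sqrt (p ^ 2 + (z + z) ^ 2 + (mp + mm) ^ 2) := by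
        apply Real.sqrt_le_sqrt
        have h5 : 0 ≤ ν * p := by positivity
        rw [← hM]
        nlinarith [h, h5]
      linarith
  -- numeric estimate
  have hBsq := Real.sq_sqrt (show (0:ℝ) ≤ p ^ 2 + M ^ 2 by positivity)
  set B := Real.sqrt (p ^ 2 + M ^ 2) with hBdef
  have hB0 : 0 ≤ B := Real.sqrt_nonneg _
  have hBle : B ≤ 1.5 * p := by
    have hle : p ^ 2 + M ^ 2 ≤ (1.5 * p) ^ 2 := by nlinarith
    calc B ≤ Real.sqrt ((1.5 * p) ^ 2) := Real.sqrt_le_sqrt hle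
      _ = 1.5 * p := Real.sqrt_sq (by positivity)
  have hs3 : (1.5:ℝ) ≤ Real.sqrt 3 := by
    rw [show (1.5:ℝ) = Real.sqrt (1.5 ^ 2) from (Real.sqrt_sq (by norm_num)).symm]
    exact Real.sqrt_le_sqrt (by norm_num)
  have hs3p : (0:ℝ) < Real.sqrt 3 := by linarith
  set c := ν / (2 * Real.sqrt 3) with hcdef
  have hc0 : 0 ≤ c := by positivity
  have hcle : c ≤ ν / 3 := by
    apply div_le_div_of_nonneg_left hν0.le (by norm_num) (by linarith)
  have hkey : (c + B) ^ 2 ≤ p ^ 2 + 3 * ν * p + M ^ 2 := by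
    nlinarith [mul_le_mul hcle hBle hB0 (by positivity : (0:ℝ) ≤ ν / 3),
      mul_self_le_mul_self hc0 hcle]
  have hfin : c + B ≤ Real.sqrt (p ^ 2 + 3 * ν * p + M ^ 2) := by
    calc c + B = Real.sqrt ((c + B) ^ 2) := (Real.sqrt_sq (by positivity)).symm
      _ ≤ _ := Real.sqrt_le_sqrt hkey
  linarith
end

section
/- For all p ≥ M > 0 and 0 < δ < 1/2, with μ₊, μ₋ > 0, μ₊+μ₋ = 1, τ = M/p, define H_p(η, ζ) = √((η−μ₊)² + |ζ|² + μ₊²τ²) + √((η+μ₋)² + |ζ|² + μ₋²τ²) − √(1+τ²) on ℝ × ℝ^{d-1}. Then H_p(μ₊/(1−δ), 0) − H_p(μ₊, 0) ≥ C(μ₊, μ₋) δ for a positive constant C depending only on μ₊ and μ₋. -/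
theorem stmt_19 (μp μm : ℝ) (hμp : 0 < μp) (hμm : 0 < μm) (hμ : μp + μm = 1) :
    ∃ C : ℝ, 0 < C ∧ ∀ p M δ : ℝ, 0 < M → M ≤ p → 0 < δ → δ < 1 / 2 →
      C * δ ≤
        (Real.sqrt ((μp / (1 - δ) - μp) ^ 2 + μp ^ 2 * (M / p) ^ 2)
            + Real.sqrt ((μp / (1 - δ) + μm) ^ 2 + μm ^ 2 * (M / p) ^ 2)
            - Real.sqrt (1 + (M / p) ^ 2))
          - (Real.sqrt ((μp - μp) ^ 2 + μp ^ 2 * (M / p) ^ 2)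
            + Real.sqrt ((μp + μm) ^ 2 + μm ^ 2 * (M / p) ^ 2)
            - Real.sqrt (1 + (M / p) ^ 2)) := by
  refine ⟨μp / 2, by positivity, ?_⟩
  intro p M δ hM hMp hδ hδ2
  have hp : 0 < p := lt_of_lt_of_le hM hMp
  set τ : ℝ := M / p with hτdef
  have hτ0 : 0 ≤ τ := by positivity
  have hτ1 : τ ≤ 1 := by
    rw [hτdef, div_le_one hp]; exact hMp
  clear_value τ
  have hμp1 : μp < 1 := by linarith
  have hμm1 : μm < 1 := by linarith
  have h1δ : (0:ℝ) < 1 - δ := by linarith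
  -- first sqrt at base point
  have e0 : Real.sqrt ((μp - μp) ^ 2 + μp ^ 2 * τ ^ 2) = μp * τ := by
    rw [show (μp - μp) ^ 2 + μp ^ 2 * τ ^ 2 = (μp * τ) ^ 2 by ring,
      Real.sqrt_sq (by positivity)]
  -- A ≥ μp * τ
  have hA : μp * τ ≤ Real.sqrt ((μp / (1 - δ) - μp) ^ 2 + μp ^ 2 * τ ^ 2) := by
    calc μp * τ = Real.sqrt ((μp * τ) ^ 2) := (Real.sqrt_sq (by positivity)).symm
    _ ≤ _ := Real.sqrt_le_sqrt (by nlinarith [sq_nonneg (μp / (1 - δ) - μp)])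
  -- B0 bounds
  set B0 : ℝ := Real.sqrt ((μp + μm) ^ 2 + μm ^ 2 * τ ^ 2) with hB0def
  have hB0sq : B0 ^ 2 = 1 + μm ^ 2 * τ ^ 2 := by
    rw [hB0def, Real.sq_sqrt (by positivity), hμ]; ring
  have hB0le : B0 ≤ 2 := by
    rw [hB0def]
    calc Real.sqrt ((μp + μm) ^ 2 + μm ^ 2 * τ ^ 2) ≤ Real.sqrt 4 := by
          apply Real.sqrt_le_sqrt; rw [hμ]
          have hm2 : μm ^ 2 ≤ 1 := by nlinarith
          nlinarith [mul_le_mul_of_nonneg_right hm2 (sq_nonneg τ)]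
    _ = 2 := by rw [show (4:ℝ) = 2 ^ 2 by norm_num, Real.sqrt_sq (by norm_num)]
  have hB0nn : 0 ≤ B0 := hB0def ▸ Real.sqrt_nonneg _
  clear_value B0
  -- X ≥ 1 + μp * δ
  set X : ℝ := μp / (1 - δ) + μm with hXdef
  have hX : 1 + μp * δ ≤ X := by
    rw [hXdef]
    have : μp * (1 + δ) ≤ μp / (1 - δ) := by
      rw [le_div_iff₀ h1δ]
      nlinarith [mul_nonneg hμp.le (mul_nonneg hδ.le hδ.le)]
    linarith
  clear_value X
  -- B ≥ B0 + μp * δ / 2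
  have hB : B0 + μp * δ / 2 ≤ Real.sqrt (X ^ 2 + μm ^ 2 * τ ^ 2) := by
    calc B0 + μp * δ / 2 = Real.sqrt ((B0 + μp * δ / 2) ^ 2) := by
          rw [Real.sqrt_sq (by positivity)]
    _ ≤ _ := by
          apply Real.sqrt_le_sqrt
          have h1 : (1 + μp * δ) ^ 2 ≤ X ^ 2 :=
            pow_le_pow_left₀ (by positivity) hX 2
          have key : B0 * (μp * δ) ≤ 2 * (μp * δ) :=
            mul_le_mul_of_nonneg_right hB0le (mul_nonneg hμp.le hδ.le)
          have expand : (B0 + μp * δ / 2) ^ 2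
              = B0 ^ 2 + B0 * (μp * δ) + (μp * δ) ^ 2 / 4 := by ring
          have h2 : (1 + μp * δ) ^ 2 = 1 + 2 * (μp * δ) + (μp * δ) ^ 2 := by ring
          rw [expand, hB0sq]
          nlinarith [sq_nonneg (μp * δ)]
  rw [e0]
  linarith
end
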